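/- For every M ∈ SL(2,ℝ), the cuspidal height satisfies 𝒴(M) ≤ ‖M‖², where 𝒴(M) = sup{Im(γM(i)) : γ ∈ SL(2,ℤ)} and ‖M‖ is the Frobenius norm. -/
import Mathlib

open Real MatrixGroups

/-- The Frobenius norm of a `2 × 2` real matrix. -/
noncomputable def frobNorm (M : Matrix (Fin 2) (Fin 2) ℝ) : ℝ :=
  Real.sqrt (∑ i, ∑ j, (M i j) ^ 2)

/-- The cuspidal height `𝒴(M) = sup{Im(γ M (i)) : γ ∈ SL(2,ℤ)}`. -/
noncomputable def cuspHeight (M : Matrix.SpecialLinearGroup (Fin 2) ℝ) : ℝ :=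
  ⨆ γ : Matrix.SpecialLinearGroup (Fin 2) ℤ,
    ((Matrix.SpecialLinearGroup.map (Int.castRingHom ℝ) γ * M) • UpperHalfPlane.I).im

lemma row_sq_pos (N : Matrix.SpecialLinearGroup (Fin 2) ℝ) :
    0 < (N 1 0 : ℝ)^2 + (N 1 1)^2 := by
  have hdet := N.prop
  rw [Matrix.det_fin_two] at hdet
  rcases lt_or_eq_of_le (by positivity : (0:ℝ) ≤ (N 1 0)^2 + (N 1 1)^2) with h | h
  · exact h
  · exfalso
    have h0 : (N 1 0 : ℝ) = 0 := by nlinarith [sq_nonneg (N 1 0 : ℝ), sq_nonneg (N 1 1 : ℝ)]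
    have h1 : (N 1 1 : ℝ) = 0 := by nlinarith [sq_nonneg (N 1 0 : ℝ), sq_nonneg (N 1 1 : ℝ)]
    rw [h0, h1] at hdet; simp at hdet

lemma im_smul_I (N : Matrix.SpecialLinearGroup (Fin 2) ℝ) :
    (N • UpperHalfPlane.I).im = 1 / ((N 1 0)^2 + (N 1 1)^2) := by
  have hdet := N.prop
  rw [Matrix.det_fin_two] at hdet
  rw [UpperHalfPlane.specialLinearGroup_apply]
  simp only [UpperHalfPlane.im, UpperHalfPlane.coe_mk, UpperHalfPlane.coe_I,
    Algebra.algebraMap_self, RingHom.id_apply, Complex.div_im, Complex.add_im, Complex.add_re,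
    Complex.mul_im, Complex.mul_re, Complex.I_re, Complex.I_im, Complex.ofReal_re,
    Complex.ofReal_im, Complex.normSq_apply]
  ring_nf
  linear_combination hdet * ((N 1 0:ℝ) ^ 2 + (N 1 1:ℝ) ^ 2)⁻¹

/-- For every `M ∈ SL(2,ℝ)`, the cuspidal height satisfies `𝒴(M) ≤ ‖M‖²`, where `‖M‖`
is the Frobenius norm. -/
theorem cuspHeight_le_frobNorm_sq (M : Matrix.SpecialLinearGroup (Fin 2) ℝ) :
    cuspHeight M ≤ frobNorm (M : Matrix (Fin 2) (Fin 2) ℝ) ^ 2 := by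
  set a := (M 0 0 : ℝ); set b := (M 0 1 : ℝ); set c := (M 1 0 : ℝ); set d := (M 1 1 : ℝ)
  have hdetM : a * d - b * c = 1 := by
    have := M.prop; rw [Matrix.det_fin_two] at this; exact this
  have hfrob : frobNorm (M : Matrix (Fin 2) (Fin 2) ℝ) ^ 2 = a^2 + b^2 + c^2 + d^2 := by
    rw [frobNorm, Real.sq_sqrt (by positivity)]
    simp [Fin.sum_univ_two]; ring
  rw [cuspHeight]
  apply ciSup_le
  intro γ
  set N := Matrix.SpecialLinearGroup.map (Int.castRingHom ℝ) γ * M with hN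
  rw [im_smul_I, hfrob]
  set r := (γ 1 0 : ℝ); set s := (γ 1 1 : ℝ)
  have hx : (N 1 0 : ℝ) = r * a + s * c := by
    simp [hN, Matrix.SpecialLinearGroup.coe_mul, Matrix.mul_apply, Fin.sum_univ_two, r, s, a, c]
  have hy : (N 1 1 : ℝ) = r * b + s * d := by
    simp [hN, Matrix.SpecialLinearGroup.coe_mul, Matrix.mul_apply, Fin.sum_univ_two, r, s, b, d]
  have hrs : (1:ℝ) ≤ r^2 + s^2 := by
    have hdetγ := γ.prop
    rw [Matrix.det_fin_two] at hdetγ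
    have hne : γ 1 0 ≠ 0 ∨ γ 1 1 ≠ 0 := by
      by_contra h
      push_neg at h
      rw [h.1, h.2] at hdetγ; simp at hdetγ
    have hint : (1:ℤ) ≤ (γ 1 0)^2 + (γ 1 1)^2 := by
      rcases hne with h | h
      · nlinarith [sq_nonneg (γ 1 1), Int.one_le_abs h, sq_abs (γ 1 0), abs_nonneg (γ 1 0)]
      · nlinarith [sq_nonneg (γ 1 0), Int.one_le_abs h, sq_abs (γ 1 1), abs_nonneg (γ 1 1)]
    calc (1:ℝ) ≤ ((γ 1 0 : ℤ)^2 + (γ 1 1 : ℤ)^2 : ℤ) := by exact_mod_cast hint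
      _ = r^2 + s^2 := by push_cast [r, s]; ring
  have hpos := row_sq_pos N
  rw [hx, hy] at hpos ⊢
  rw [div_le_iff₀ hpos]
  set x := r * a + s * c; set y := r * b + s * d
  have hr : r = x * d - y * c := by simp only [x, y]; linear_combination (-r) * hdetM
  have hs : s = y * a - x * b := by simp only [x, y]; linear_combination (-s) * hdetM
  have key : r^2 + s^2 ≤ (x^2 + y^2) * (a^2 + b^2 + c^2 + d^2) := by
    calc r^2 + s^2 = (x*d - y*c)^2 + (y*a - x*b)^2 := by rw [← hr, ← hs]
      _ ≤ (x^2 + y^2)*(c^2 + d^2) + (x^2 + y^2)*(a^2 + b^2) := by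
          nlinarith [sq_nonneg (x*c + y*d), sq_nonneg (y*b + x*a)]
      _ = (x^2 + y^2) * (a^2 + b^2 + c^2 + d^2) := by ring
  calc (1:ℝ) ≤ r^2 + s^2 := hrs
    _ ≤ (x^2 + y^2) * (a^2 + b^2 + c^2 + d^2) := key
    _ = (a^2 + b^2 + c^2 + d^2) * (x^2 + y^2) := mul_comm _ _
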